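/- If (Ω, F, P) is purely atomic and A ⊆ L⁰₊ is solid, then A is tight if and only if it is radially bounded (convexity is not needed). -/

import Mathlib

open MeasureTheory Filter

variable {Ω : Type*} [MeasurableSpace Ω]

/-- `A ⊆ L⁰₊` is solid: `X ∈ A` and `0 ≤ Y ≤ X` (a.e.) imply `Y ∈ A`. -/
def Solid (P : Measure Ω) (A : Set (Ω → ℝ)) : Prop :=
  ∀ X ∈ A, ∀ Y : Ω → ℝ, (∀ᵐ ω ∂P, 0 ≤ Y ω ∧ Y ω ≤ X ω) → Y ∈ A

/-- Radial boundedness for a set of positive random variables: every ray through a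
nonzero element eventually leaves the set. -/
def RadiallyBoundedPos (P : Measure Ω) (A : Set (Ω → ℝ)) : Prop :=
  ∀ X ∈ A, P {ω | 0 < X ω} ≠ 0 →
    ∃ Λ > (0 : ℝ), ∀ l : ℝ, Λ < l → (fun ω => l * X ω) ∉ A

/-- Tightness (boundedness in probability) for a set of positive random variables. -/
def TightPos (P : Measure Ω) (A : Set (Ω → ℝ)) : Prop :=
  ∀ ε > (0 : ℝ), ∃ M > (0 : ℝ), ∀ X ∈ A, P {ω | M < X ω} < ENNReal.ofReal ε

/-- Radial boundedness for a general set of random variables. -/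
def RadiallyBounded (P : Measure Ω) (A : Set (Ω → ℝ)) : Prop :=
  ∀ X ∈ A, P {ω | X ω ≠ 0} ≠ 0 →
    ∃ Λ > (0 : ℝ), ∀ l : ℝ, Λ < l → (fun ω => l * X ω) ∉ A

/-- Tightness (boundedness in probability) for a general set of random variables. -/
def Tight (P : Measure Ω) (A : Set (Ω → ℝ)) : Prop :=
  ∀ ε > (0 : ℝ), ∃ M > (0 : ℝ), ∀ X ∈ A, P {ω | M < |X ω|} < ENNReal.ofReal ε

/-- Membership in the closure of `A` for the (metrizable) topology of convergence
in probability. -/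
def InClosure (P : Measure Ω) (A : Set (Ω → ℝ)) (X : Ω → ℝ) : Prop :=
  ∃ Y : ℕ → Ω → ℝ, (∀ n, Y n ∈ A) ∧ TendstoInMeasure P Y atTop X

/-- `B` is an atom of the probability space `(Ω, P)`. -/
def IsProbAtom (P : Measure Ω) (B : Set Ω) : Prop :=
  MeasurableSet B ∧ P B ≠ 0 ∧
    ∀ E : Set Ω, MeasurableSet E → E ⊆ B → P E = 0 ∨ P E = P B

/-- The probability space is purely atomic. -/
def PurelyAtomic (P : Measure Ω) : Prop :=
  ∀ E : Set Ω, MeasurableSet E → P E ≠ 0 → ∃ B ⊆ E, IsProbAtom P B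

/-- On a purely atomic probability space, a solid set `A ⊆ L⁰₊` is tight iff it is
radially bounded. -/
theorem stmt8 (P : Measure Ω) [IsProbabilityMeasure P] (hPA : PurelyAtomic P)
    (A : Set (Ω → ℝ)) (hL0 : ∀ X ∈ A, AEMeasurable X P)
    (hpos : ∀ X ∈ A, ∀ᵐ ω ∂P, 0 ≤ X ω) (hsolid : Solid P A) :
    TightPos P A ↔ RadiallyBoundedPos P A := by
  constructor
  · -- Tight → Radially bounded (atomicity not needed)
    intro ht X hX hX0
    have hU : {ω | 0 < X ω} ⊆ ⋃ n : ℕ, {ω | 1/(n+1 : ℝ) < X ω} := by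
      intro ω hω
      have hω' : (0:ℝ) < X ω := hω
      obtain ⟨n, hn⟩ := exists_nat_one_div_lt hω'
      exact Set.mem_iUnion.2 ⟨n, hn⟩
    have hex : ∃ n : ℕ, P {ω | 1/(n+1 : ℝ) < X ω} ≠ 0 := by
      by_contra h
      push_neg at h
      exact hX0 (le_antisymm ((measure_mono hU).trans (le_of_eq (measure_iUnion_null h)))
        zero_le)
    obtain ⟨n, hn⟩ := hex
    set δ : ℝ := 1/(n+1 : ℝ) with hδdef
    have hδ : 0 < δ := by positivity
    set c := P {ω | δ < X ω} with hc
    have hcne : c ≠ ⊤ := (measure_lt_top P _).ne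
    have hε : 0 < c.toReal := ENNReal.toReal_pos hn hcne
    obtain ⟨M, hM, hMt⟩ := ht c.toReal hε
    refine ⟨M / δ, div_pos hM hδ, ?_⟩
    intro l hl hmem
    have hl0 : 0 < l := lt_trans (div_pos hM hδ) hl
    have hlδ : M < l * δ := (div_lt_iff₀ hδ).mp hl
    have hsub : {ω | δ < X ω} ⊆ {ω | M < (fun ω => l * X ω) ω} := by
      intro ω hω
      exact lt_trans hlδ (mul_lt_mul_of_pos_left hω hl0)
    have := hMt _ hmem
    rw [ENNReal.ofReal_toReal hcne] at this
    exact lt_irrefl c ((measure_mono hsub).trans_lt this)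
  · -- Radially bounded → Tight
    intro hrb ε hε
    by_contra hcon
    push_neg at hcon
    have h' : ∀ n : ℕ, ∃ X ∈ A, ENNReal.ofReal ε ≤ P {ω | (n+1 : ℝ) < X ω} :=
      fun n => hcon ((n : ℝ) + 1) (by positivity)
    choose Xs hXA hXbd using h'
    -- measurable versions
    set f : ℕ → Ω → ℝ := fun n => (hL0 (Xs n) (hXA n)).mk (Xs n) with hfdef
    have hfm : ∀ n, Measurable (f n) := fun n => (hL0 (Xs n) (hXA n)).measurable_mk
    have hfe : ∀ n, Xs n =ᵐ[P] f n := fun n => (hL0 (Xs n) (hXA n)).ae_eq_mk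
    set E : ℕ → Set Ω := fun n => {ω | (n+1 : ℝ) < f n ω} with hEdef
    have hEm : ∀ n, MeasurableSet (E n) := fun n => measurableSet_lt measurable_const (hfm n)
    have hEbd : ∀ n, ENNReal.ofReal ε ≤ P (E n) := by
      intro n
      have heq : {ω | (n+1 : ℝ) < Xs n ω} =ᵐ[P] E n := by
        filter_upwards [hfe n] with ω hω
        change ((n:ℝ)+1 < Xs n ω) = ((n:ℝ)+1 < f n ω)
        rw [hω]
      exact (measure_congr heq) ▸ hXbd n
    set S : ℕ → Set Ω := fun N => ⋃ k : ℕ, E (N + k) with hSdef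
    have hSm : ∀ N, MeasurableSet (S N) := fun N => MeasurableSet.iUnion fun k => hEm _
    have hSanti : Antitone S := by
      intro m N hmN ω hω
      obtain ⟨k, hk⟩ := Set.mem_iUnion.1 hω
      exact Set.mem_iUnion.2 ⟨N - m + k, by rwa [show m + (N - m + k) = N + k by omega]⟩
    have hSbd : ∀ N, ENNReal.ofReal ε ≤ P (S N) := by
      intro N
      exact (hEbd N).trans (measure_mono (Set.subset_iUnion (fun k => E (N + k)) 0))
    set F : Set Ω := ⋂ N, S N with hFdef
    have hFm : MeasurableSet F := MeasurableSet.iInter hSm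
    have hFbd : ENNReal.ofReal ε ≤ P F := by
      have htend : Tendsto (P ∘ S) atTop (nhds (P F)) :=
        tendsto_measure_iInter_atTop (fun N => (hSm N).nullMeasurableSet) hSanti
          ⟨0, (measure_lt_top P _).ne⟩
      exact ge_of_tendsto' htend hSbd
    have hF0 : P F ≠ 0 := by
      intro h
      rw [h] at hFbd
      exact (ENNReal.ofReal_pos.2 hε).ne' (le_antisymm hFbd zero_le)
    obtain ⟨B, hBF, hBm, hB0, hBatom⟩ := hPA F hFm hF0
    -- for every N there is n ≥ N with P (E n ∩ B) = P B
    have hclaim : ∀ N : ℕ, ∃ n, N ≤ n ∧ P (E n ∩ B) = P B := by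
      intro N
      by_contra h
      push_neg at h
      have hz : ∀ k : ℕ, P (E (N + k) ∩ B) = 0 := by
        intro k
        rcases hBatom (E (N + k) ∩ B) ((hEm _).inter hBm) Set.inter_subset_right with h0 | h1
        · exact h0
        · exact absurd h1 (h (N + k) (Nat.le_add_right N k))
      have hBsub : B ⊆ ⋃ k : ℕ, (E (N + k) ∩ B) := by
        intro ω hω
        obtain ⟨k, hk⟩ := Set.mem_iUnion.1 (Set.mem_iInter.1 (hBF hω) N)
        exact Set.mem_iUnion.2 ⟨k, hk, hω⟩
      exact hB0 (le_antisymm ((measure_mono hBsub).trans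
        (le_of_eq (measure_iUnion_null hz))) zero_le)
    -- the key membership lemma
    set X : Ω → ℝ := B.indicator (fun _ => (1:ℝ)) with hXdef
    have hkey : ∀ n : ℕ, P (E n ∩ B) = P B → ∀ r : ℝ, 0 ≤ r → r ≤ (n : ℝ) + 1 →
        (fun ω => r * X ω) ∈ A := by
      intro n hPn r hr0 hr1
      have hdiff : P (B \ E n) = 0 := by
        have h1 : P (B ∩ E n) + P (B \ E n) = P B := measure_inter_add_diff B (hEm n)
        rw [Set.inter_comm, hPn] at h1
        have h2 : P B + P (B \ E n) = P B + 0 := by rw [add_zero]; exact h1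
        exact (ENNReal.add_right_inj (measure_lt_top P B).ne).mp h2
      apply hsolid (Xs n) (hXA n)
      filter_upwards [hpos (Xs n) (hXA n), hfe n, measure_eq_zero_iff_ae_notMem.mp hdiff]
        with ω hωpos hωeq hωnm
      by_cases hωB : ω ∈ B
      · have hωE : ω ∈ E n := by
          by_contra hc
          exact hωnm ⟨hωB, hc⟩
        have hgt : (n : ℝ) + 1 < Xs n ω := by rw [hωeq]; exact hωE
        have hXω : X ω = 1 := Set.indicator_of_mem hωB _
        constructor
        · rw [hXω, mul_one]; exact hr0
        · rw [hXω, mul_one]; exact hr1.trans hgt.le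
      · have hXω : X ω = 0 := Set.indicator_of_notMem hωB _
        rw [hXω, mul_zero]
        exact ⟨le_refl 0, hωpos⟩
    -- X ∈ A
    have hXA' : X ∈ A := by
      obtain ⟨n, -, hPn⟩ := hclaim 0
      have h1 := hkey n hPn 1 zero_le_one (by linarith [Nat.cast_nonneg (α := ℝ) n])
      have : X = fun ω => 1 * X ω := by funext ω; rw [one_mul]
      rwa [this]
    -- P {0 < X} ≠ 0
    have hXpos : P {ω | 0 < X ω} ≠ 0 := by
      have : {ω | 0 < X ω} = B := by
        ext ω
        by_cases hωB : ω ∈ B <;>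
          simp [X, Set.indicator_of_mem, Set.indicator_of_notMem, hωB]
      rw [this]
      exact hB0
    obtain ⟨Λ, hΛ0, hΛ⟩ := hrb X hXA' hXpos
    obtain ⟨n, hnN, hPn⟩ := hclaim ⌈Λ⌉₊
    have hΛn : Λ < (n : ℝ) + 1 := by
      have : Λ ≤ (⌈Λ⌉₊ : ℝ) := Nat.le_ceil Λ
      have hn' : (⌈Λ⌉₊ : ℝ) ≤ (n : ℝ) := Nat.cast_le.2 hnN
      linarith
    exact hΛ ((n : ℝ) + 1) hΛn
      (hkey n hPn ((n : ℝ) + 1) (by positivity) (le_refl _))
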